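/- arXiv:2408.12923 — 4 statements merged into one kernel-verified Lean document; each statement's English description precedes it below -/
import Mathlib

section
/- For every real number $k_2$ with $0 < |k_2| \le \pi$, one has $\int_{-\pi}^{\pi} \frac{1 - B(k_1)e^{ik_2}}{2 - \cos k_1 - \cos k_2}\,\frac{dk_1}{2\pi} \;=\; e^{ik_2}\Big(\sqrt{2}-1 - \frac{\sqrt{2}(1-\cos k_2) + i\sin k_2}{\sqrt{(1-\cos k_2)(3-\cos k_2)}}\Big)$, where the integral is the Bochner integral of the complex-valued integrand over $[-\pi,\pi]$ with respect to Lebesgue measure divided by $2\pi$. -/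
open MeasureTheory Real

/-- `B k = (√2 - 1)(√2 + cos k)`. -/
noncomputable def B (k : ℝ) : ℝ := (Real.sqrt 2 - 1) * (Real.sqrt 2 + Real.cos k)

lemma key (a : ℝ) (ha : 1 < a) :
    ∫ x in (-π)..π, (a - Real.cos x)⁻¹ = 2 * π / Real.sqrt ((a-1)*(a+1)) := by
  have ha1 : (0:ℝ) < a - 1 := by linarith
  have ha2 : (0:ℝ) < a + 1 := by linarith
  set c : ℝ := Real.sqrt ((a+1)/(a-1)) with hc
  have hcpos : 0 < c := Real.sqrt_pos.mpr (by positivity)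
  have hc2 : c^2 = (a+1)/(a-1) := Real.sq_sqrt (by positivity)
  have hc2' : c^2 * (a-1) = a + 1 := by rw [hc2]; field_simp
  have hc1 : 1 < c := by
    have h1 : (1:ℝ) < c^2 := by rw [hc2, lt_div_iff₀ ha1]; linarith
    nlinarith [h1, hcpos]
  have hD : ∀ x : ℝ, 0 < (1+c) + (1-c) * Real.cos x := by
    intro x
    nlinarith [Real.cos_le_one x, Real.neg_one_le_cos x]
  have hA : ∀ x : ℝ, 0 < a - Real.cos x := by
    intro x; nlinarith [Real.cos_le_one x]
  set G : ℝ → ℝ := fun x => (2 / (c * (a-1))) *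
    (x/2 + Real.arctan ((c-1) * Real.sin x / ((1+c) + (1-c) * Real.cos x))) with hG
  have hderiv : ∀ x : ℝ, HasDerivAt G ((a - Real.cos x)⁻¹) x := by
    intro x
    have hsin : HasDerivAt Real.sin (Real.cos x) x := Real.hasDerivAt_sin x
    have hcos : HasDerivAt Real.cos (-Real.sin x) x := Real.hasDerivAt_cos x
    have hN : HasDerivAt (fun x => (c-1) * Real.sin x) ((c-1) * Real.cos x) x :=
      hsin.const_mul _
    have hDd : HasDerivAt (fun x => (1+c) + (1-c) * Real.cos x) ((1-c) * (-Real.sin x)) x :=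
      (hcos.const_mul _).const_add _
    have hq := (hN.div hDd (ne_of_gt (hD x)))
    have harc := hq.arctan
    have hid : HasDerivAt (fun x : ℝ => x/2) (1/2) x := by
      simpa using (hasDerivAt_id x).div_const 2
    have hfull := ((hid.add harc).const_mul (2 / (c * (a-1))))
    refine hfull.congr_deriv ?_
    simp only [Pi.div_apply]
    symm
    set s := Real.sin x with hsdef
    set co := Real.cos x with hcodef
    have hs : s^2 + co^2 = 1 := Real.sin_sq_add_cos_sq x
    set D : ℝ := (1+c) + (1-c)*co with hDdef
    have hDpos : 0 < D := hD x
    have hApos : 0 < a - co := hA x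
    set X : ℝ := (c-1)*co*D - (c-1)*s*((1-c)*(-s)) with hXdef
    have e3 : 1/(1 + ((c-1)*s/D)^2) * (X/D^2) = X/(D^2 + ((c-1)*s)^2) := by
      have h1 : 1 + ((c-1)*s/D)^2 = (D^2 + ((c-1)*s)^2)/D^2 := by
        field_simp
      have hpos : (0:ℝ) < D^2 + ((c-1)*s)^2 := by positivity
      rw [h1]
      field_simp
    have e1 : D^2 + ((c-1)*s)^2 = 4*(a-co)/(a-1) := by
      rw [hDdef]
      field_simp
      linear_combination ((a-1)*(c-1)^2) * hs + (2 - 2*co) * hc2'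
    have e2 : X = (2*(co-a) + 2*c*(a-1))/(a-1) := by
      rw [hXdef, hDdef]
      field_simp
      linear_combination (-(a-1)*(c-1)^2) * hs + (co - 1) * hc2'
    rw [e3, e1, e2]
    rw [eq_comm]
    field_simp
    ring
  have hint : IntervalIntegrable (fun x => (a - Real.cos x)⁻¹) MeasureTheory.volume (-π) π := by
    apply Continuous.intervalIntegrable
    exact (continuous_const.sub Real.continuous_cos).inv₀ (fun x => ne_of_gt (hA x))
  have hFTC := intervalIntegral.integral_eq_sub_of_hasDerivAt (fun x _ => hderiv x) hint
  rw [hFTC]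
  have hsπ : Real.sin π = 0 := Real.sin_pi
  have hsnπ : Real.sin (-π) = 0 := by simp
  have hca : c * (a-1) = Real.sqrt ((a-1)*(a+1)) := by
    rw [hc, ← Real.sqrt_sq ha1.le, ← Real.sqrt_mul (by positivity)]
    congr 1; field_simp; ring_nf; rw [Real.sq_sqrt (by nlinarith)]
  simp only [hG, hsπ, hsnπ, mul_zero, zero_mul, zero_div, Real.arctan_zero, add_zero]
  rw [← hca]
  field_simp
  ring

/-- For `0 < |k₂| ≤ π`, the horizontal-momentum integral of the critical Ising propagator:
`∫_{-π}^{π} (1 - B(k₁) e^{i k₂}) / (2 - cos k₁ - cos k₂) dk₁/(2π)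
  = e^{i k₂} (√2 - 1 - (√2 (1 - cos k₂) + i sin k₂)/√((1-cos k₂)(3-cos k₂)))`. -/
theorem stmt_0 (k₂ : ℝ) (h0 : 0 < |k₂|) (hπ : |k₂| ≤ π) :
    (∫ k₁ in Set.Icc (-π) π,
        (1 - (B k₁ : ℂ) * Complex.exp (Complex.I * (k₂ : ℂ))) /
          ((↑(2 - Real.cos k₁ - Real.cos k₂) : ℂ))) / (2 * (π : ℂ))
      =
    Complex.exp (Complex.I * (k₂ : ℂ)) *
      ((↑(Real.sqrt 2 - 1) : ℂ) -
        ((↑(Real.sqrt 2 * (1 - Real.cos k₂)) : ℂ) + Complex.I * (↑(Real.sin k₂) : ℂ)) /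
          (↑(Real.sqrt ((1 - Real.cos k₂) * (3 - Real.cos k₂))) : ℂ)) := by
  have hπpos : (0:ℝ) < π := Real.pi_pos
  have hcoslt : Real.cos k₂ < 1 := by
    have h1 : Real.cos |k₂| < Real.cos 0 :=
      Real.cos_lt_cos_of_nonneg_of_le_pi le_rfl hπ h0
    rw [Real.cos_abs, Real.cos_zero] at h1
    exact h1
  set a : ℝ := 2 - Real.cos k₂ with ha_def
  have ha : 1 < a := by simp only [ha_def]; linarith
  set E : ℂ := Complex.exp (Complex.I * (k₂ : ℂ)) with hE
  set A : ℂ := 1 - ((2:ℂ) - (Real.sqrt 2 : ℂ)) * E with hA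
  set Cc : ℂ := -(((Real.sqrt 2 : ℝ) - 1 : ℝ) : ℂ) * E with hCc
  have hr2 : Real.sqrt 2 ^ 2 = 2 := Real.sq_sqrt (by norm_num)
  -- positivity of denominators
  have hApos : ∀ x : ℝ, 0 < a - Real.cos x := fun x => by
    have := Real.cos_le_one x; simp only [ha_def]; linarith
  set S : ℝ := Real.sqrt ((1 - Real.cos k₂) * (3 - Real.cos k₂)) with hS
  have hSpos : 0 < S := Real.sqrt_pos.mpr (by nlinarith [Real.neg_one_le_cos k₂])
  -- convert set integral to interval integral
  rw [MeasureTheory.integral_Icc_eq_integral_Ioc,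
    ← intervalIntegral.integral_of_le (by linarith : -π ≤ π)]
  -- pointwise rewrite of the integrand
  have h2c : ((Real.sqrt 2 : ℝ) : ℂ)^2 = 2 := by
    rw [← Complex.ofReal_pow, hr2]; norm_num
  have hcongr : ∀ x : ℝ,
      (1 - (B x : ℂ) * E) / ((↑(2 - Real.cos x - Real.cos k₂) : ℂ))
        = (A + Cc * (a : ℂ)) * (((a - Real.cos x : ℝ) : ℂ))⁻¹ - Cc := by
    intro x
    have h1 : (2 - Real.cos x - Real.cos k₂) = a - Real.cos x := by
      simp only [ha_def]; ring
    rw [h1]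
    have hcast : (((a - Real.cos x : ℝ)) : ℂ) = (a : ℂ) - (Real.cos x : ℂ) :=
      Complex.ofReal_sub _ _
    have hne : (a : ℂ) - (Real.cos x : ℂ) ≠ 0 := by
      rw [← hcast]; exact_mod_cast (hApos x).ne'
    have hB : (B x : ℂ) = ((Real.sqrt 2 : ℂ) - 1) * ((Real.sqrt 2 : ℂ) + (Real.cos x : ℂ)) := by
      simp only [B]; push_cast; ring
    rw [hcast, div_eq_iff hne, sub_mul, mul_assoc, inv_mul_cancel₀ hne, mul_one, hB]
    simp only [hA, hCc]
    push_cast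
    linear_combination (-E) * h2c
  rw [intervalIntegral.integral_congr (fun x _ => hcongr x)]
  -- integrability
  have hcont : Continuous fun x : ℝ => (((a - Real.cos x : ℝ) : ℂ))⁻¹ := by
    apply Continuous.inv₀
    · exact Complex.continuous_ofReal.comp (continuous_const.sub Real.continuous_cos)
    · intro x; exact_mod_cast (hApos x).ne'
  have hint1 : IntervalIntegrable (fun x : ℝ => (A + Cc * (a:ℂ)) * (((a - Real.cos x : ℝ) : ℂ))⁻¹)
      MeasureTheory.volume (-π) π := (continuous_const.mul hcont).intervalIntegrable _ _
  have hint2 : IntervalIntegrable (fun _ : ℝ => Cc) MeasureTheory.volume (-π) π :=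
    intervalIntegrable_const
  rw [intervalIntegral.integral_sub hint1 hint2, intervalIntegral.integral_const_mul,
    intervalIntegral.integral_const]
  -- evaluate the real integral
  have hIval : (∫ x in (-π)..π, (((a - Real.cos x : ℝ) : ℂ))⁻¹) = ((2 * π / S : ℝ) : ℂ) := by
    have hc : ∀ x : ℝ, (((a - Real.cos x : ℝ) : ℂ))⁻¹ = (((a - Real.cos x)⁻¹ : ℝ) : ℂ) := by
      intro x; push_cast; ring
    rw [intervalIntegral.integral_congr (fun x _ => hc x), intervalIntegral.integral_ofReal,
      key a ha]
    have h : (a-1)*(a+1) = (1 - Real.cos k₂)*(3 - Real.cos k₂) := by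
      simp only [ha_def]; ring
    rw [h, ← hS]
  rw [hIval]
  -- the key complex identity
  have hkey : A + Cc * (a : ℂ) =
      -E * (((Real.sqrt 2 * (1 - Real.cos k₂) : ℝ) : ℂ) + Complex.I * ((Real.sin k₂ : ℝ) : ℂ)) := by
    have hEexp : E = (Real.cos k₂ : ℂ) + (Real.sin k₂ : ℂ) * Complex.I := by
      rw [hE, mul_comm, Complex.exp_mul_I, ← Complex.ofReal_cos, ← Complex.ofReal_sin]
    simp only [hA, hCc, hEexp, ha_def]
    push_cast
    linear_combination (-1 : ℂ) * Complex.sin_sq_add_cos_sq (k₂ : ℂ) +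
      (Complex.sin (k₂ : ℂ))^2 * Complex.I_sq
  rw [hkey]
  -- final algebra
  have hScnz : ((S:ℝ) : ℂ) ≠ 0 := by exact_mod_cast hSpos.ne'
  have hπcnz : ((π:ℝ) : ℂ) ≠ 0 := by exact_mod_cast hπpos.ne'
  rw [sub_neg_eq_add, Complex.real_smul, hCc]
  push_cast
  field_simp
  ring
end

section
/- One has $\frac{\sqrt{2}+1}{2}\int_{-\pi}^{\pi}\int_{-\pi}^{\pi} \frac{\big(1 - B(k_1)e^{ik_2}\big)\big(e^{-ik_2} - 1\big)}{2 - \cos k_1 - \cos k_2}\,\frac{dk_1\,dk_2}{(2\pi)^2} \;=\; -\frac{\sqrt{2}}{2} - \frac{1}{\pi}$, where the double integral is the Bochner integral of the complex-valued integrand over $[-\pi,\pi]^2$ with respect to Lebesgue measure divided by $(2\pi)^2$ (the left-hand side is in fact real). -/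
open MeasureTheory Real

open intervalIntegral

lemma poisson_denom1_pos {r : ℝ} (hr : |r| < 1) (x : ℝ) : 0 < 1 - r*Real.cos x := by
  have h1 : |r * Real.cos x| < 1 :=
    lt_of_le_of_lt (by rw [abs_mul]; exact mul_le_of_le_one_right (abs_nonneg r) (Real.abs_cos_le_one x)) hr
  linarith [(abs_lt.1 h1).2]

lemma poisson_denom_pos {r : ℝ} (hr : |r| < 1) (x : ℝ) : 0 < 1 - 2*r*Real.cos x + r^2 := by
  have hd := poisson_denom1_pos hr x
  have hsc := Real.sin_sq_add_cos_sq x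
  have h : 1 - 2*r*Real.cos x + r^2 = (1 - r*Real.cos x)^2 + (r*Real.sin x)^2 := by
    linear_combination (-(r^2)) * hsc
  nlinarith [sq_nonneg (r*Real.sin x), mul_pos hd hd]

lemma poisson_hasDeriv {r : ℝ} (hr : |r| < 1) (x : ℝ) :
    HasDerivAt (fun y : ℝ => y + 2 * Real.arctan (r * Real.sin y / (1 - r * Real.cos y)))
      ((1 - r^2) / (1 - 2*r*Real.cos x + r^2)) x := by
  have hd := poisson_denom1_pos hr x
  have hD := poisson_denom_pos hr x
  have hsc := Real.sin_sq_add_cos_sq x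
  have h1 : HasDerivAt (fun y : ℝ => r * Real.sin y) (r * Real.cos x) x :=
    (Real.hasDerivAt_sin x).const_mul r
  have h2 : HasDerivAt (fun y : ℝ => 1 - r * Real.cos y) (-(r * -Real.sin x)) x := by
    simpa using (((Real.hasDerivAt_cos x).const_mul r).const_sub 1)
  have hq : HasDerivAt (fun y : ℝ => r * Real.sin y / (1 - r * Real.cos y))
      ((r * Real.cos x * (1 - r * Real.cos x) - r * Real.sin x * (-(r * -Real.sin x))) /
        (1 - r * Real.cos x)^2) x := h1.div h2 hd.ne'
  have hfin := (hasDerivAt_id x).add (hq.arctan.const_mul 2)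
  refine hfin.congr_deriv (Eq.symm ?_)
  have hA : 1 + (r * Real.sin x / (1 - r * Real.cos x))^2
      = (1 - 2*r*Real.cos x + r^2) / (1 - r*Real.cos x)^2 := by
    field_simp
    linear_combination r^2 * hsc
  have hnum : r * Real.cos x * (1 - r * Real.cos x) - r * Real.sin x * (-(r * -Real.sin x))
      = (r * Real.cos x - r^2) * 1 := by linear_combination (-(r^2)) * hsc
  rw [hA, hnum, one_div_div]
  field_simp
  rw [one_add_div (by intro h; linarith), div_left_inj' (by intro h; linarith)]
  ring

lemma poisson_int {r : ℝ} (hr : |r| < 1) :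
    ∫ x in (-π)..π, (1 - r^2) / (1 - 2*r*Real.cos x + r^2) = 2*π := by
  have hcont : Continuous (fun x : ℝ => (1 - r^2) / (1 - 2*r*Real.cos x + r^2)) := by
    apply Continuous.div continuous_const (by continuity)
    intro x; exact (poisson_denom_pos hr x).ne'
  rw [intervalIntegral.integral_eq_sub_of_hasDerivAt
    (fun x _ => poisson_hasDeriv hr x) (hcont.intervalIntegrable _ _)]
  simp [Real.sin_pi, Real.arctan_zero]
  ring

lemma cos_int {a : ℝ} (ha : 1 < a) :
    ∫ x in (-π)..π, (a - Real.cos x)⁻¹ = 2*π / Real.sqrt (a^2-1) := by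
  set s := Real.sqrt (a^2-1) with hsdef
  have hs2 : s^2 = a^2 - 1 := Real.sq_sqrt (by nlinarith)
  have hs : 0 < s := Real.sqrt_pos.2 (by nlinarith)
  have hrpos : 0 < a - s := by nlinarith
  have hrlt : a - s < 1 := by nlinarith
  have hr : |a - s| < 1 := abs_lt.2 ⟨by linarith, hrlt⟩
  have key : ∀ x : ℝ, (a - Real.cos x)⁻¹
      = s⁻¹ * ((1 - (a-s)^2) / (1 - 2*(a-s)*Real.cos x + (a-s)^2)) := by
    intro x
    have hc := Real.cos_le_one x
    have hac : 0 < a - Real.cos x := by linarith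
    have hden : 1 - 2*(a-s)*Real.cos x + (a-s)^2 = 2*(a-s)*(a - Real.cos x) := by
      linear_combination hs2
    have hnum : 1 - (a-s)^2 = 2*s*(a-s) := by linear_combination hs2
    rw [hden, hnum]
    field_simp
  rw [intervalIntegral.integral_congr (fun x _ => key x), intervalIntegral.integral_const_mul,
    poisson_int hr]
  field_simp

lemma inner_int {a : ℝ} (ha : 1 < a) :
    ∫ x in (-π)..π, (Real.cos x - 1) / (a - Real.cos x)
      = 2*π * (Real.sqrt ((a-1)/(a+1)) - 1) := by
  have hpos : ∀ x : ℝ, 0 < a - Real.cos x := fun x => by linarith [Real.cos_le_one x]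
  have hcont : Continuous (fun x : ℝ => (a - Real.cos x)⁻¹) :=
    Continuous.inv₀ (by continuity) (fun x => (hpos x).ne')
  have key : ∀ x : ℝ, (Real.cos x - 1) / (a - Real.cos x)
      = (a - 1) * (a - Real.cos x)⁻¹ - 1 := by
    intro x
    field_simp [(hpos x).ne']
    ring
  rw [intervalIntegral.integral_congr (fun x _ => key x), intervalIntegral.integral_sub
    (show IntervalIntegrable (fun x => (a - 1) * (a - Real.cos x)⁻¹) volume (-π) π from (continuous_const.mul hcont).intervalIntegrable _ _) (intervalIntegrable_const),
    intervalIntegral.integral_const_mul, cos_int ha, intervalIntegral.integral_const]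
  have h1 : (0:ℝ) < a - 1 := by linarith
  have h2 : (0:ℝ) < a + 1 := by linarith
  have e1 : Real.sqrt (a^2-1) = Real.sqrt (a-1) * Real.sqrt (a+1) := by
    rw [show a^2-1 = (a-1)*(a+1) by ring, Real.sqrt_mul h1.le]
  have e2 : Real.sqrt ((a-1)/(a+1)) = Real.sqrt (a-1)/Real.sqrt (a+1) :=
    Real.sqrt_div h1.le _
  have e3 : Real.sqrt (a-1) * Real.sqrt (a-1) = a - 1 := Real.mul_self_sqrt h1.le
  have hsa : 0 < Real.sqrt (a-1) := Real.sqrt_pos.2 h1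
  have hsb : 0 < Real.sqrt (a+1) := Real.sqrt_pos.2 h2
  have emain : (a-1) * (2*π/Real.sqrt (a^2-1)) = 2*π*Real.sqrt ((a-1)/(a+1)) := by
    rw [e1, e2]
    field_simp
    linear_combination (-1:ℝ) * e3
  rw [smul_eq_mul, emain]
  ring


noncomputable def Hout (k : ℝ) : ℝ :=
  -4 * Real.arcsin (Real.cos (k/2) / Real.sqrt 2)
    + 2*(Real.sqrt 2 - 1) * (Real.cos (k/2) * Real.sqrt (2 - Real.cos (k/2)^2))

lemma sqrt_two_pos : (0:ℝ) < Real.sqrt 2 := Real.sqrt_pos.2 (by norm_num)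

lemma Hout_hasDeriv (k : ℝ) :
    HasDerivAt Hout
      ((2 - 2*(Real.sqrt 2 - 1)*Real.sin (k/2)^2)
        * (Real.sin (k/2) / Real.sqrt (2 - Real.cos (k/2)^2))) k := by
  have hsv := Real.sin_sq_add_cos_sq (k/2)
  set s := Real.sin (k/2) with hsdef
  set v := Real.cos (k/2) with hvdef
  have h2v : (0:ℝ) < 2 - v^2 := by nlinarith [sq_nonneg s]
  have hsq : 0 < Real.sqrt (2 - v^2) := Real.sqrt_pos.2 h2v
  have hsq2 : Real.sqrt (2 - v^2)^2 = 2 - v^2 := Real.sq_sqrt h2v.le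
  have h2 : Real.sqrt 2 ^ 2 = 2 := Real.sq_sqrt (by norm_num)
  -- derivative of v = cos (k/2)
  have hv : HasDerivAt (fun k : ℝ => Real.cos (k/2)) (-s * (1/2)) k := by
    have := (Real.hasDerivAt_cos (k/2)).comp k ((hasDerivAt_id k).div_const 2)
    exact this
  -- arcsin part
  have harg : HasDerivAt (fun k : ℝ => Real.cos (k/2) / Real.sqrt 2)
      (-s * (1/2) / Real.sqrt 2) k := hv.div_const _
  have h12 : (1:ℝ) < Real.sqrt 2 := by nlinarith [h2, sqrt_two_pos]
  have hb1 : |v / Real.sqrt 2| < 1 := by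
    rw [abs_div, abs_of_pos sqrt_two_pos, div_lt_one sqrt_two_pos]
    exact lt_of_le_of_lt (Real.abs_cos_le_one _) h12
  have hasin : HasDerivAt (fun k : ℝ => Real.arcsin (Real.cos (k/2) / Real.sqrt 2))
      ((1 / Real.sqrt (1 - (v / Real.sqrt 2)^2)) * (-s * (1/2) / Real.sqrt 2)) k := by
    have h := (Real.hasDerivAt_arcsin (by linarith [(abs_lt.1 hb1).1] : v / Real.sqrt 2 ≠ -1)
      (by linarith [(abs_lt.1 hb1).2] : v / Real.sqrt 2 ≠ 1)).comp k harg
    exact h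
  -- sqrt part
  have hin : HasDerivAt (fun k : ℝ => 2 - Real.cos (k/2)^2) (-(2*v*(-s * (1/2)))) k := by
    simpa using ((hv.pow 2).const_sub 2)
  have hsqrt : HasDerivAt (fun k : ℝ => Real.sqrt (2 - Real.cos (k/2)^2))
      (-(2*v*(-s * (1/2))) / (2 * Real.sqrt (2 - v^2))) k := hin.sqrt h2v.ne'
  have hprod := hv.mul hsqrt
  have htot := ((hasin.const_mul (-4)).add (hprod.const_mul (2*(Real.sqrt 2 - 1))))
  refine htot.congr_deriv (Eq.symm ?_)
  have e1 : Real.sqrt (1 - (v / Real.sqrt 2)^2) = Real.sqrt (2 - v^2) / Real.sqrt 2 := by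
    rw [show 1 - (v / Real.sqrt 2)^2 = (2 - v^2) / 2 by rw [div_pow, h2]; ring]
    rw [Real.sqrt_div (by linarith : (0:ℝ) ≤ 2 - v^2)]
  rw [e1]
  simp only [← hsdef, ← hvdef]
  have h4 : Real.sqrt (2 - v^2)^4 = (2 - v^2)^2 := by
    rw [show (4:ℕ) = 2*2 from rfl, pow_mul, hsq2]
  field_simp
  linear_combination (-4*s*(Real.sqrt 2-1)) * hsv
    + (2*s*(Real.sqrt 2-1)) * hsq2

lemma G_eq {k : ℝ} (hk : k ∈ Set.Icc (0:ℝ) π) :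
    (1 + B k) * Real.sqrt ((1 - Real.cos k)/(3 - Real.cos k))
      = (2 - 2*(Real.sqrt 2 - 1)*Real.sin (k/2)^2)
        * (Real.sin (k/2) / Real.sqrt (2 - Real.cos (k/2)^2)) := by
  obtain ⟨hk0, hkpi⟩ := hk
  have hs0 : 0 ≤ Real.sin (k/2) :=
    Real.sin_nonneg_of_nonneg_of_le_pi (by linarith) (by linarith [Real.pi_pos])
  have hdb := Real.cos_two_mul (k/2)
  rw [show 2*(k/2) = k by ring] at hdb
  have hsc := Real.sin_sq_add_cos_sq (k/2)
  have hhalf : Real.sin (k/2)^2 = (1 - Real.cos k)/2 := by linarith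
  have hchalf : Real.cos (k/2)^2 = (1 + Real.cos k)/2 := by linarith
  have h2 : Real.sqrt 2 ^ 2 = 2 := Real.sq_sqrt (by norm_num)
  have e1 : (1 - Real.cos k)/(3 - Real.cos k) = Real.sin (k/2)^2 / (2 - Real.cos (k/2)^2) := by
    rw [hhalf, hchalf]
    have h3 : (3:ℝ) - Real.cos k > 0 := by nlinarith [Real.cos_le_one k]
    rw [div_eq_div_iff (ne_of_gt h3) (ne_of_gt (by nlinarith [Real.cos_le_one k] : (0:ℝ) < 2 - (1+Real.cos k)/2))]
    ring
  have e2 : (1 + B k) = 2 - 2*(Real.sqrt 2 - 1)*Real.sin (k/2)^2 := by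
    rw [B, hhalf]
    linear_combination (1:ℝ) * h2
  rw [e1, e2, Real.sqrt_div (sq_nonneg _), Real.sqrt_sq hs0]

lemma cont_deriv_form : Continuous (fun k : ℝ =>
    (2 - 2*(Real.sqrt 2 - 1)*Real.sin (k/2)^2)
      * (Real.sin (k/2) / Real.sqrt (2 - Real.cos (k/2)^2))) := by
  have hpos : ∀ k : ℝ, 0 < 2 - Real.cos (k/2)^2 := by
    intro k; nlinarith [Real.sin_sq_add_cos_sq (k/2), sq_nonneg (Real.sin (k/2))]
  apply Continuous.mul (by continuity)
  apply Continuous.div (by continuity) (by continuity)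
  intro x
  exact (Real.sqrt_pos.2 (hpos x)).ne'

lemma arcsin_inv_sqrt_two : Real.arcsin (Real.sqrt 2)⁻¹ = π/4 := by
  have h : (Real.sqrt 2 : ℝ)⁻¹ = Real.sqrt 2 / 2 := by
    rw [inv_eq_one_div]
    rw [div_eq_div_iff sqrt_two_pos.ne' (by norm_num : (2:ℝ) ≠ 0)]
    nlinarith [Real.mul_self_sqrt (by norm_num : (0:ℝ) ≤ 2)]
  rw [h, ← Real.sin_pi_div_four, Real.arcsin_sin (by linarith [Real.pi_pos]) (by linarith [Real.pi_pos])]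

lemma int_G_0pi : ∫ k in (0:ℝ)..π, (1 + B k) * Real.sqrt ((1 - Real.cos k)/(3 - Real.cos k))
    = π + 2 - 2*Real.sqrt 2 := by
  have hpi := Real.pi_pos
  rw [intervalIntegral.integral_congr (g := fun k =>
      (2 - 2*(Real.sqrt 2 - 1)*Real.sin (k/2)^2)
        * (Real.sin (k/2) / Real.sqrt (2 - Real.cos (k/2)^2)))
      (fun k hk => G_eq (by rwa [Set.uIcc_of_le hpi.le] at hk))]
  rw [intervalIntegral.integral_eq_sub_of_hasDerivAt (fun k _ => Hout_hasDeriv k)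
    (cont_deriv_form.intervalIntegrable _ _)]
  have hH1 : Hout π = 0 := by
    simp [Hout, Real.cos_pi_div_two]
  have hH0 : Hout 0 = -π + 2*Real.sqrt 2 - 2 := by
    simp [Hout, arcsin_inv_sqrt_two]
    rw [show (2:ℝ)-1 = 1 by norm_num, Real.sqrt_one]
    ring
  rw [hH1, hH0]; ring

lemma cont_B : Continuous B := by unfold B; continuity

lemma cont_G : Continuous (fun k : ℝ =>
    (1 + B k) * Real.sqrt ((1 - Real.cos k)/(3 - Real.cos k))) := by
  apply Continuous.mul (by have := cont_B; continuity)
  apply Real.continuous_sqrt.comp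
  apply Continuous.div (by continuity) (by continuity)
  intro x; nlinarith [Real.cos_le_one x]

lemma int_G_full : ∫ k in (-π)..π, (1 + B k) * Real.sqrt ((1 - Real.cos k)/(3 - Real.cos k))
    = 2*(π + 2 - 2*Real.sqrt 2) := by
  have hint : ∀ a b : ℝ, IntervalIntegrable (fun k : ℝ =>
      (1 + B k) * Real.sqrt ((1 - Real.cos k)/(3 - Real.cos k))) volume a b :=
    fun a b => cont_G.intervalIntegrable a b
  rw [← intervalIntegral.integral_add_adjacent_intervals (a := -π) (b := 0) (c := π)
    (hint _ _) (hint _ _)]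
  have heven : ∫ k in (-π)..(0:ℝ), (1 + B k) * Real.sqrt ((1 - Real.cos k)/(3 - Real.cos k))
      = ∫ k in (0:ℝ)..π, (1 + B k) * Real.sqrt ((1 - Real.cos k)/(3 - Real.cos k)) := by
    have h := intervalIntegral.integral_comp_neg (a := (0:ℝ)) (b := π)
      (fun k : ℝ => (1 + B k) * Real.sqrt ((1 - Real.cos k)/(3 - Real.cos k)))
    rw [neg_zero] at h
    rw [← h]
    apply intervalIntegral.integral_congr
    intro x _
    simp [B, Real.cos_neg]
  rw [heven, int_G_0pi]; ring

lemma int_oneB : ∫ k in (-π)..π, (1 + B k) = 2*π*(3 - Real.sqrt 2) := by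
  have h2 : Real.sqrt 2 ^ 2 = 2 := Real.sq_sqrt (by norm_num)
  have key : ∀ k : ℝ, 1 + B k = (3 - Real.sqrt 2) + (Real.sqrt 2 - 1) * Real.cos k := by
    intro k; rw [B]; linear_combination (1:ℝ) * h2
  rw [intervalIntegral.integral_congr (fun k _ => key k),
    intervalIntegral.integral_add intervalIntegrable_const
      (show IntervalIntegrable (fun x => (Real.sqrt 2 - 1) * Real.cos x) volume (-π) π from (continuous_const.mul Real.continuous_cos).intervalIntegrable _ _),
    intervalIntegral.integral_const, intervalIntegral.integral_const_mul, integral_cos]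
  simp [Real.sin_pi]
  left; ring

lemma outer_val : ∫ k in (-π)..π,
    (1 + B k) * (2*π*(Real.sqrt ((1 - Real.cos k)/(3 - Real.cos k)) - 1))
    = 4*Real.sqrt 2*π^2 - 8*π^2 + 8*π - 8*Real.sqrt 2*π := by
  have key : ∀ k : ℝ, (1 + B k) * (2*π*(Real.sqrt ((1 - Real.cos k)/(3 - Real.cos k)) - 1))
      = 2*π*((1 + B k) * Real.sqrt ((1 - Real.cos k)/(3 - Real.cos k))) - 2*π*(1 + B k) := by
    intro k; ring
  rw [intervalIntegral.integral_congr (fun k _ => key k),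
    intervalIntegral.integral_sub (show IntervalIntegrable (fun k => 2*π*((1 + B k) * Real.sqrt ((1 - Real.cos k)/(3 - Real.cos k)))) volume (-π) π from (continuous_const.mul cont_G).intervalIntegrable _ _)
      (show IntervalIntegrable (fun k => 2*π*(1 + B k)) volume (-π) π from (continuous_const.mul (continuous_const.add cont_B)).intervalIntegrable _ _),
    intervalIntegral.integral_const_mul, intervalIntegral.integral_const_mul,
    int_G_full, int_oneB]
  ring

lemma int_sin {a : ℝ} (ha : 1 < a) :
    ∫ x in (-π)..π, Real.sin x / (a - Real.cos x) = 0 := by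
  have hpos : ∀ x : ℝ, 0 < a - Real.cos x := fun x => by linarith [Real.cos_le_one x]
  have hder : ∀ x : ℝ, HasDerivAt (fun y : ℝ => Real.log (a - Real.cos y))
      (Real.sin x / (a - Real.cos x)) x := by
    intro x
    have h1 : HasDerivAt (fun y : ℝ => a - Real.cos y) (Real.sin x) x := by
      simpa using ((Real.hasDerivAt_cos x).const_sub a)
    simpa [div_eq_mul_inv, mul_comm] using h1.log (hpos x).ne'
  have hcont : Continuous (fun x : ℝ => Real.sin x / (a - Real.cos x)) :=
    Continuous.div (by continuity) (by continuity) (fun x => (hpos x).ne')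
  rw [intervalIntegral.integral_eq_sub_of_hasDerivAt (fun x _ => hder x)
    (hcont.intervalIntegrable _ _)]
  simp [Real.cos_pi, Real.cos_neg]

lemma cos_lt_one' {x : ℝ} (h1 : -π ≤ x) (h2 : x ≤ π) (hx : x ≠ 0) : Real.cos x < 1 := by
  have hdb := Real.cos_two_mul (x/2)
  rw [show 2*(x/2) = x by ring] at hdb
  have hsc := Real.sin_sq_add_cos_sq (x/2)
  have hs : Real.sin (x/2) ≠ 0 := by
    rcases lt_or_gt_of_ne hx with h | h
    · have : Real.sin (x/2) < 0 := by
        apply Real.sin_neg_of_neg_of_neg_pi_lt (by linarith)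
        linarith [Real.pi_pos]
      linarith
    · have : 0 < Real.sin (x/2) := Real.sin_pos_of_pos_of_lt_pi (by linarith)
        (by linarith [Real.pi_pos])
      linarith
  have : 0 < Real.sin (x/2)^2 := by positivity
  nlinarith

/-- real part integrand -/
noncomputable def gre (p : ℝ × ℝ) : ℝ :=
  ((1 + B p.1) * (Real.cos p.2 - 1)) / (2 - Real.cos p.1 - Real.cos p.2)

/-- imaginary part integrand -/
noncomputable def him (p : ℝ × ℝ) : ℝ :=
  ((B p.1 - 1) * Real.sin p.2) / (2 - Real.cos p.1 - Real.cos p.2)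

lemma B_bounds (x : ℝ) : 0 ≤ B x ∧ B x ≤ 1 := by
  have h2 : Real.sqrt 2 ^ 2 = 2 := Real.sq_sqrt (by norm_num)
  have h12 : 1 < Real.sqrt 2 := by nlinarith [sqrt_two_pos]
  simp only [B]
  constructor
  · apply mul_nonneg (by linarith)
    linarith [Real.neg_one_le_cos x]
  · nlinarith [Real.cos_le_one x]

lemma gre_bound (p : ℝ × ℝ) : ‖gre p‖ ≤ 2 := by
  obtain ⟨hb0, hb1⟩ := B_bounds p.1
  have hc1 := Real.cos_le_one p.1
  have hc2 := Real.cos_le_one p.2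
  have hD0 : 0 ≤ 2 - Real.cos p.1 - Real.cos p.2 := by linarith
  rcases eq_or_lt_of_le hD0 with hD | hD
  · simp [gre, ← hD]
  · rw [gre, Real.norm_eq_abs, abs_div, abs_of_pos hD, div_le_iff₀ hD, abs_mul]
    rw [abs_of_nonneg (by linarith : (0:ℝ) ≤ 1 + B p.1),
      abs_of_nonpos (by linarith : Real.cos p.2 - 1 ≤ 0)]
    nlinarith

lemma him_bound (p : ℝ × ℝ) : ‖him p‖ ≤ 2 := by
  obtain ⟨hb0, hb1⟩ := B_bounds p.1
  have hc1 := Real.cos_le_one p.1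
  have hc2 := Real.cos_le_one p.2
  have hs2 := Real.abs_sin_le_one p.2
  have hD0 : 0 ≤ 2 - Real.cos p.1 - Real.cos p.2 := by linarith
  rcases eq_or_lt_of_le hD0 with hD | hD
  · simp [him, ← hD]
  · rw [him, Real.norm_eq_abs, abs_div, abs_of_pos hD, div_le_iff₀ hD, abs_mul]
    have h1 : |B p.1 - 1| ≤ 1 - Real.cos p.1 := by
      rw [abs_of_nonpos (by linarith : B p.1 - 1 ≤ 0)]
      have h2 : Real.sqrt 2 ^ 2 = 2 := Real.sq_sqrt (by norm_num)
      have h12 : 1 < Real.sqrt 2 := by nlinarith [sqrt_two_pos]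
      simp only [B]
      nlinarith [Real.neg_one_le_cos p.1]
    nlinarith [abs_nonneg (Real.sin p.2), abs_nonneg (B p.1 - 1), Real.neg_one_le_cos p.1]

lemma meas_gre : Measurable gre := by
  apply Measurable.div
  · exact ((continuous_const.add (cont_B.comp continuous_fst)).mul
      ((Real.continuous_cos.comp continuous_snd).sub continuous_const)).measurable
  · exact ((continuous_const.sub (Real.continuous_cos.comp continuous_fst)).sub
      (Real.continuous_cos.comp continuous_snd)).measurable

lemma meas_him : Measurable him := by
  apply Measurable.div
  · exact (((cont_B.comp continuous_fst).sub continuous_const).mul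
      (Real.continuous_sin.comp continuous_snd)).measurable
  · exact ((continuous_const.sub (Real.continuous_cos.comp continuous_fst)).sub
      (Real.continuous_cos.comp continuous_snd)).measurable

lemma sq_finite : volume (Set.Icc (-π) π ×ˢ Set.Icc (-π) π) < ⊤ :=
  (isCompact_Icc.prod isCompact_Icc).measure_lt_top

lemma int_gre : IntegrableOn gre (Set.Icc (-π) π ×ˢ Set.Icc (-π) π) volume := by
  apply Integrable.mono' (g := fun _ => (2:ℝ))
    (integrableOn_const sq_finite.ne)
    meas_gre.aestronglyMeasurable.restrict
  exact Filter.Eventually.of_forall gre_bound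

lemma int_him : IntegrableOn him (Set.Icc (-π) π ×ˢ Set.Icc (-π) π) volume := by
  apply Integrable.mono' (g := fun _ => (2:ℝ))
    (integrableOn_const sq_finite.ne)
    meas_him.aestronglyMeasurable.restrict
  exact Filter.Eventually.of_forall him_bound

lemma ae_ne_zero : ∀ᵐ x : ℝ ∂(volume : Measure ℝ), x ≠ 0 := by
  rw [MeasureTheory.ae_iff]
  refine measure_mono_null ?_ (Real.volume_singleton (a := 0))
  intro x; simp

lemma icc_int_eq {f : ℝ → ℝ} : ∫ y in Set.Icc (-π) π, f y = ∫ y in (-π)..π, f y := by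
  rw [MeasureTheory.integral_Icc_eq_integral_Ioc,
    intervalIntegral.integral_of_le (by linarith [Real.pi_pos])]

lemma gre_int_val : ∫ p in (Set.Icc (-π) π ×ˢ Set.Icc (-π) π), gre p
    = 4*Real.sqrt 2*π^2 - 8*π^2 + 8*π - 8*Real.sqrt 2*π := by
  rw [Measure.volume_eq_prod, MeasureTheory.setIntegral_prod _ (by
    rw [← Measure.volume_eq_prod]; exact int_gre)]
  have key : ∀ᵐ x : ℝ ∂volume, x ∈ Set.Icc (-π) π →
      (∫ y in Set.Icc (-π) π, gre (x, y))
        = (1 + B x) * (2*π*(Real.sqrt ((1 - Real.cos x)/(3 - Real.cos x)) - 1)) := by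
    filter_upwards [ae_ne_zero] with x hx hmem
    have ha : 1 < 2 - Real.cos x := by
      have := cos_lt_one' hmem.1 hmem.2 hx; linarith
    rw [icc_int_eq]
    have e : ∀ y : ℝ, gre (x, y) = (1 + B x) * ((Real.cos y - 1)/((2 - Real.cos x) - Real.cos y)) := by
      intro y
      simp only [gre]
      rw [mul_div_assoc]
    rw [intervalIntegral.integral_congr (fun y _ => e y),
      intervalIntegral.integral_const_mul, inner_int ha]
    rw [show (2 - Real.cos x - 1) = 1 - Real.cos x by ring,
      show (2 - Real.cos x + 1) = 3 - Real.cos x by ring]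
  rw [MeasureTheory.setIntegral_congr_ae measurableSet_Icc key, icc_int_eq, outer_val]

lemma him_int_val : ∫ p in (Set.Icc (-π) π ×ˢ Set.Icc (-π) π), him p = 0 := by
  rw [Measure.volume_eq_prod, MeasureTheory.setIntegral_prod _ (by
    rw [← Measure.volume_eq_prod]; exact int_him)]
  have key : ∀ᵐ x : ℝ ∂volume, x ∈ Set.Icc (-π) π →
      (∫ y in Set.Icc (-π) π, him (x, y)) = 0 := by
    filter_upwards [ae_ne_zero] with x hx hmem
    have ha : 1 < 2 - Real.cos x := by
      have := cos_lt_one' hmem.1 hmem.2 hx; linarith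
    rw [icc_int_eq]
    have e : ∀ y : ℝ, him (x, y) = (B x - 1) * (Real.sin y/((2 - Real.cos x) - Real.cos y)) := by
      intro y
      simp only [him]
      rw [mul_div_assoc]
    rw [intervalIntegral.integral_congr (fun y _ => e y),
      intervalIntegral.integral_const_mul, int_sin ha, mul_zero]
  rw [MeasureTheory.setIntegral_congr_ae measurableSet_Icc key]
  simp

lemma f_decomp (p : ℝ × ℝ) :
    ((1 - (B p.1 : ℂ) * Complex.exp (Complex.I * (p.2 : ℂ))) *
        (Complex.exp (-Complex.I * (p.2 : ℂ)) - 1)) /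
      ((↑(2 - Real.cos p.1 - Real.cos p.2) : ℝ) : ℂ)
    = ((gre p : ℝ) : ℂ) + Complex.I * ((him p : ℝ) : ℂ) := by
  obtain ⟨x, y⟩ := p
  have h1 : Complex.exp (Complex.I * (y:ℂ))
      = (Real.cos y : ℂ) + (Real.sin y : ℂ) * Complex.I := by
    rw [mul_comm, Complex.exp_mul_I, Complex.ofReal_cos, Complex.ofReal_sin]
  have h2 : Complex.exp (-Complex.I * (y:ℂ))
      = (Real.cos y : ℂ) - (Real.sin y : ℂ) * Complex.I := by
    rw [show -Complex.I * (y:ℂ) = ((-y : ℝ) : ℂ) * Complex.I by push_cast; ring,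
      Complex.exp_mul_I, Complex.ofReal_cos, Complex.ofReal_sin]
    push_cast
    simp [Real.cos_neg, Real.sin_neg]
    ring
  have hsc : Complex.sin (y:ℂ)^2 + Complex.cos (y:ℂ)^2 = 1 := Complex.sin_sq_add_cos_sq _
  have hnum : (1 - (B x : ℂ) * Complex.exp (Complex.I * (y:ℂ))) *
      (Complex.exp (-Complex.I * (y:ℂ)) - 1)
      = (((1 + B x) * (Real.cos y - 1) : ℝ) : ℂ)
        + Complex.I * (((B x - 1) * Real.sin y : ℝ) : ℂ) := by
    rw [h1, h2]
    push_cast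
    linear_combination (-(B x : ℂ)) * hsc + ((B x : ℂ) * Complex.sin (y:ℂ)^2) * Complex.I_sq
  rw [hnum]
  simp only [gre, him]
  push_cast
  ring

/-- The on-diagonal discrete vertical derivative of the critical infinite-plane Ising propagator:
`((√2+1)/2) ∫∫_{[-π,π]²} (1 - B(k₁) e^{i k₂})(e^{-i k₂} - 1)/(2 - cos k₁ - cos k₂)
   dk₁ dk₂/(2π)² = -√2/2 - 1/π`. -/
theorem stmt_1 :
    ((↑(Real.sqrt 2 + 1) : ℂ) / 2) *
      ((∫ k in (Set.Icc (-π) π ×ˢ Set.Icc (-π) π),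
          ((1 - (B k.1 : ℂ) * Complex.exp (Complex.I * (k.2 : ℂ))) *
              (Complex.exp (-Complex.I * (k.2 : ℂ)) - 1)) /
            ((↑(2 - Real.cos k.1 - Real.cos k.2) : ℂ))) / (↑(((2 * π) ^ 2 : ℝ)) : ℂ))
      = (↑(-(Real.sqrt 2) / 2 - 1 / π) : ℂ) := by
  have hint : ∫ k in (Set.Icc (-π) π ×ˢ Set.Icc (-π) π),
      ((1 - (B k.1 : ℂ) * Complex.exp (Complex.I * (k.2 : ℂ))) *
          (Complex.exp (-Complex.I * (k.2 : ℂ)) - 1)) /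
        ((↑(2 - Real.cos k.1 - Real.cos k.2) : ℝ) : ℂ)
      = ((4*Real.sqrt 2*π^2 - 8*π^2 + 8*π - 8*Real.sqrt 2*π : ℝ) : ℂ) := by
    rw [MeasureTheory.integral_congr_ae (Filter.Eventually.of_forall
      (fun p => f_decomp p))]
    have hgint : MeasureTheory.Integrable (fun p : ℝ × ℝ => ((gre p : ℝ) : ℂ))
        (volume.restrict (Set.Icc (-π) π ×ˢ Set.Icc (-π) π)) := int_gre.ofReal
    have hhint2 : MeasureTheory.Integrable (fun p : ℝ × ℝ => Complex.I * ((him p : ℝ) : ℂ))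
        (volume.restrict (Set.Icc (-π) π ×ˢ Set.Icc (-π) π)) := by
      exact (Integrable.ofReal int_him).const_mul Complex.I
    rw [MeasureTheory.integral_add hgint hhint2, MeasureTheory.integral_const_mul]
    have e1 : ∫ p in (Set.Icc (-π) π ×ˢ Set.Icc (-π) π), ((gre p : ℝ) : ℂ)
        = ((∫ p in (Set.Icc (-π) π ×ˢ Set.Icc (-π) π), gre p : ℝ) : ℂ) :=
      integral_ofReal
    have e2 : ∫ p in (Set.Icc (-π) π ×ˢ Set.Icc (-π) π), ((him p : ℝ) : ℂ)
        = ((∫ p in (Set.Icc (-π) π ×ˢ Set.Icc (-π) π), him p : ℝ) : ℂ) :=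
      integral_ofReal
    rw [e1, e2, gre_int_val, him_int_val]
    simp
  rw [hint]
  have hpi := Real.pi_pos
  have h2 : Real.sqrt 2 ^ 2 = 2 := Real.sq_sqrt (by norm_num)
  rw [show ((↑(-(Real.sqrt 2) / 2 - 1 / π) : ℂ))
      = ((-(Real.sqrt 2) / 2 - 1 / π : ℝ) : ℂ) from rfl]
  rw [show ((↑(Real.sqrt 2 + 1) : ℂ)) = ((Real.sqrt 2 + 1 : ℝ) : ℂ) from rfl]
  rw [show ((2:ℂ)) = ((2:ℝ):ℂ) by norm_num]
  rw [← Complex.ofReal_div, ← Complex.ofReal_div, ← Complex.ofReal_mul]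
  rw [Complex.ofReal_inj]
  field_simp
  linear_combination (4*π - 8) * h2
end

section
/- One has $\frac{\sqrt{2}+1}{2}\int_{-\pi}^{\pi} \frac{\sqrt{2}\,(1-\cos k)^2 + \sin^2 k}{\sqrt{(1-\cos k)(3-\cos k)}}\,\frac{dk}{2\pi} \;=\; \frac{1+\sqrt{2}}{2} + \frac{1}{\pi}$, where the integral is over $[-\pi,\pi]$ with respect to Lebesgue measure divided by $2\pi$. -/
open MeasureTheory Real

noncomputable def myF (k : ℝ) : ℝ :=
  -4 * Real.arcsin (Real.cos (k/2) / Real.sqrt 2) -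
    2 * (Real.sqrt 2 - 1) * (Real.cos (k/2) * Real.sqrt (2 - Real.cos (k/2)^2))

lemma deriv_alg (s c r q : ℝ) (hr : r^2 = 2 - c^2) (hsc : s^2 = 1 - c^2)
    (hr0 : 0 < r) (hq0 : 0 < q) :
    -4*(1/(r/q)*(-(s/2)/q)) - 2*(q-1)*(-(s/2)*r + c*(c*s/(2*r)))
      = 2*s*(1+(q-1)*s^2)/r := by
  rw [eq_comm]
  field_simp
  linear_combination (2*s*(q-1))*(2*hsc - hr)

set_option maxHeartbeats 1000000 in
lemma myF_hasDerivAt (k : ℝ) :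
    HasDerivAt myF
      (2 * Real.sin (k/2) * (1 + (Real.sqrt 2 - 1) * Real.sin (k/2)^2)
        / Real.sqrt (1 + Real.sin (k/2)^2)) k := by
  have hs2 : (0:ℝ) < Real.sqrt 2 := Real.sqrt_pos.2 (by norm_num)
  set c := Real.cos (k/2) with hc
  set s := Real.sin (k/2) with hs
  have hsc : s^2 + c^2 = 1 := Real.sin_sq_add_cos_sq _
  have hc1 : c^2 ≤ 1 := by nlinarith [sq_nonneg s]
  have h2c : (0:ℝ) < 2 - c^2 := by nlinarith
  have hcd : HasDerivAt (fun k => Real.cos (k/2)) (-(s/2)) k := by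
    have := (Real.hasDerivAt_cos (k/2)).comp k ((hasDerivAt_id k).div_const 2)
    exact this.congr_deriv (by rw [hs]; ring)
  have harg : HasDerivAt (fun k => Real.cos (k/2) / Real.sqrt 2) (-(s/2) / Real.sqrt 2) k :=
    hcd.div_const _
  have h1lt : (1:ℝ) < Real.sqrt 2 := by
    rw [show (1:ℝ) = Real.sqrt 1 by simp]
    exact Real.sqrt_lt_sqrt (by norm_num) (by norm_num)
  have hlt : |c / Real.sqrt 2| < 1 := by
    rw [abs_div, abs_of_pos hs2, div_lt_one hs2]
    have := Real.abs_cos_le_one (k/2)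
    calc |c| ≤ 1 := this
    _ < Real.sqrt 2 := h1lt
  have hne1 : c / Real.sqrt 2 ≠ -1 := by
    intro h; rw [h] at hlt; norm_num at hlt
  have hne2 : c / Real.sqrt 2 ≠ 1 := by
    intro h; rw [h] at hlt; norm_num at hlt
  have harcsin := (Real.hasDerivAt_arcsin hne1 hne2).comp k harg
  have hinner : HasDerivAt (fun k => 2 - Real.cos (k/2)^2) (c * s) k := by
    have := ((hcd.pow 2).const_sub 2)
    refine this.congr_deriv ?_
    rw [hc]; push_cast; ring
  have hsqrt : HasDerivAt (fun k => Real.sqrt (2 - Real.cos (k/2)^2))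
      (c * s / (2 * Real.sqrt (2 - c^2))) k := by
    have := (Real.hasDerivAt_sqrt (ne_of_gt h2c)).comp k hinner
    refine this.congr_deriv ?_
    ring
  have hmul : HasDerivAt (fun k => Real.cos (k/2) * Real.sqrt (2 - Real.cos (k/2)^2))
      (-(s/2) * Real.sqrt (2 - c^2) + c * (c * s / (2 * Real.sqrt (2 - c^2)))) k :=
    hcd.mul hsqrt
  have hF := ((harcsin.const_mul (-4)).sub (hmul.const_mul (2 * (Real.sqrt 2 - 1))))
  have key : HasDerivAt myF
      (-4 * ((1 / Real.sqrt (1 - (c / Real.sqrt 2)^2)) * (-(s/2) / Real.sqrt 2)) -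
        2 * (Real.sqrt 2 - 1) *
          (-(s/2) * Real.sqrt (2 - c^2) + c * (c * s / (2 * Real.sqrt (2 - c^2))))) k := by
    exact hF.congr_deriv (by ring)
  convert key using 1
  have hq : Real.sqrt (1 - (c / Real.sqrt 2)^2) = Real.sqrt (2 - c^2) / Real.sqrt 2 := by
    have e1 : 1 - (c / Real.sqrt 2)^2 = (2 - c^2) / 2 := by
      rw [div_pow, Real.sq_sqrt (by norm_num : (0:ℝ) ≤ 2)]; ring
    rw [e1, Real.sqrt_div h2c.le]
  have h12 : 1 + s^2 = 2 - c^2 := by nlinarith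
  have hsq : (0:ℝ) < Real.sqrt (2 - c^2) := Real.sqrt_pos.2 h2c
  rw [h12, hq]
  exact (deriv_alg s c (Real.sqrt (2 - c^2)) (Real.sqrt 2)
    (Real.sq_sqrt h2c.le) (by nlinarith) hsq hs2).symm

lemma integrand_eq (k : ℝ) (hk : k ∈ Set.Icc 0 π) :
    (Real.sqrt 2 * (1 - Real.cos k) ^ 2 + Real.sin k ^ 2) /
        Real.sqrt ((1 - Real.cos k) * (3 - Real.cos k)) =
      2 * Real.sin (k/2) * (1 + (Real.sqrt 2 - 1) * Real.sin (k/2)^2)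
        / Real.sqrt (1 + Real.sin (k/2)^2) := by
  set s := Real.sin (k/2) with hs
  set c := Real.cos (k/2) with hc
  have hsc : s^2 + c^2 = 1 := Real.sin_sq_add_cos_sq _
  have hcos : Real.cos k = 1 - 2 * s^2 := by
    have h := Real.cos_two_mul (k/2)
    rw [show 2*(k/2) = k by ring] at h
    linarith
  have hsin : Real.sin k = 2 * s * c := by
    have h := Real.sin_two_mul (k/2)
    rw [show 2*(k/2) = k by ring] at h
    linarith
  have hs0 : 0 ≤ s := Real.sin_nonneg_of_nonneg_of_le_pi
    (by linarith [hk.1]) (by linarith [hk.2, Real.pi_pos])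
  rcases eq_or_lt_of_le hs0 with h0 | hpos
  · rw [hcos, hsin, ← h0]
    simp
  · have hden : Real.sqrt ((1 - Real.cos k) * (3 - Real.cos k)) =
        2 * s * Real.sqrt (1 + s^2) := by
      rw [hcos]
      have h1 : (1 - (1 - 2*s^2)) * (3 - (1 - 2*s^2)) = (2*s)^2 * (1 + s^2) := by ring
      rw [h1, Real.sqrt_mul (sq_nonneg _), Real.sqrt_sq (by linarith)]
    rw [hden, hcos, hsin]
    have hnum : Real.sqrt 2 * (1 - (1 - 2*s^2))^2 + (2*s*c)^2 =
        (2*s) * (2 * s * (1 + (Real.sqrt 2 - 1) * s^2)) := by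
      have hc2 : c^2 = 1 - s^2 := by linarith
      linear_combination 4*s^2*hc2
    rw [hnum]
    rw [mul_comm (2*s) (Real.sqrt (1+s^2)), ← div_div, mul_div_assoc]
    rw [mul_div_cancel_left₀ _ (by positivity : (2:ℝ)*s ≠ 0)]

lemma cont_aux : Continuous fun k : ℝ =>
    2 * Real.sin (k/2) * (1 + (Real.sqrt 2 - 1) * Real.sin (k/2)^2)
      / Real.sqrt (1 + Real.sin (k/2)^2) := by
  apply Continuous.div
  · fun_prop
  · fun_prop
  · intro x
    exact ne_of_gt (Real.sqrt_pos.2 (by positivity))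

lemma cont_aux' : Continuous fun k : ℝ =>
    2 * |Real.sin (k/2)| * (1 + (Real.sqrt 2 - 1) * Real.sin (k/2)^2)
      / Real.sqrt (1 + Real.sin (k/2)^2) := by
  apply Continuous.div
  · fun_prop
  · fun_prop
  · intro x
    exact ne_of_gt (Real.sqrt_pos.2 (by positivity))

lemma half_integral :
    (∫ k in (0:ℝ)..π,
        (Real.sqrt 2 * (1 - Real.cos k) ^ 2 + Real.sin k ^ 2) /
          Real.sqrt ((1 - Real.cos k) * (3 - Real.cos k)))
      = π + 2 * (Real.sqrt 2 - 1) := by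
  have key : (∫ k in (0:ℝ)..π,
      2 * Real.sin (k/2) * (1 + (Real.sqrt 2 - 1) * Real.sin (k/2)^2)
        / Real.sqrt (1 + Real.sin (k/2)^2)) = myF π - myF 0 := by
    apply intervalIntegral.integral_eq_sub_of_hasDerivAt
    · intro k _
      exact myF_hasDerivAt k
    · exact cont_aux.intervalIntegrable _ _
  have heq : (∫ k in (0:ℝ)..π,
      (Real.sqrt 2 * (1 - Real.cos k) ^ 2 + Real.sin k ^ 2) /
        Real.sqrt ((1 - Real.cos k) * (3 - Real.cos k)))
      = ∫ k in (0:ℝ)..π,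
        2 * Real.sin (k/2) * (1 + (Real.sqrt 2 - 1) * Real.sin (k/2)^2)
          / Real.sqrt (1 + Real.sin (k/2)^2) := by
    apply intervalIntegral.integral_congr
    intro k hk
    rw [Set.uIcc_of_le Real.pi_pos.le] at hk
    exact integrand_eq k hk
  rw [heq, key]
  have hmulself : Real.sqrt 2 * Real.sqrt 2 = 2 := Real.mul_self_sqrt (by norm_num)
  have harc : Real.arcsin ((Real.sqrt 2)⁻¹) = π / 4 := by
    have h12 : (Real.sqrt 2)⁻¹ = Real.sqrt 2 / 2 := by
      field_simp
      rw [Real.sq_sqrt (by norm_num : (0:ℝ) ≤ 2)]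
    rw [h12, ← Real.sin_pi_div_four, Real.arcsin_sin (by linarith [Real.pi_pos])
      (by linarith [Real.pi_pos])]
  have h1 : myF π = 0 := by
    unfold myF
    norm_num [Real.cos_pi_div_two]
  have h2 : myF 0 = -π - 2 * (Real.sqrt 2 - 1) := by
    unfold myF
    norm_num [harc]
    ring
  rw [h1, h2]
  ring

set_option maxHeartbeats 1000000 in
/-- `((√2+1)/2) ∫_{-π}^{π} (√2 (1-cos k)² + sin² k)/√((1-cos k)(3-cos k)) dk/(2π)
      = (1+√2)/2 + 1/π`. -/
theorem stmt_3 :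
    (Real.sqrt 2 + 1) / 2 *
      ((∫ k in Set.Icc (-π) π,
          (Real.sqrt 2 * (1 - Real.cos k) ^ 2 + Real.sin k ^ 2) /
            Real.sqrt ((1 - Real.cos k) * (3 - Real.cos k))) / (2 * π))
      = (1 + Real.sqrt 2) / 2 + 1 / π := by
  set f : ℝ → ℝ := fun k =>
    (Real.sqrt 2 * (1 - Real.cos k) ^ 2 + Real.sin k ^ 2) /
      Real.sqrt ((1 - Real.cos k) * (3 - Real.cos k)) with hf
  have heven : ∀ k, f (-k) = f k := by
    intro k; simp [hf, Real.cos_neg, Real.sin_neg, neg_sq]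
  have hIcc : (∫ k in Set.Icc (-π) π, f k) = ∫ k in (-π)..π, f k := by
    rw [intervalIntegral.integral_of_le (by linarith [Real.pi_pos] : -π ≤ π),
      MeasureTheory.integral_Icc_eq_integral_Ioc]
  have hint1 : (∫ k in (-π)..(0:ℝ), f k) = ∫ k in (0:ℝ)..π, f k := by
    have h := intervalIntegral.integral_comp_neg (a := (0:ℝ)) (b := π) (f := f)
    rw [neg_zero] at h
    rw [← h]
    exact intervalIntegral.integral_congr fun k _ => heven k
  have hintegrable : ∀ a b : ℝ, IntervalIntegrable f volume a b := by
    intro a b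
    apply (cont_aux'.intervalIntegrable a b).congr
    intro x _
    show 2 * |Real.sin (x/2)| * (1 + (Real.sqrt 2 - 1) * Real.sin (x/2)^2)
        / Real.sqrt (1 + Real.sin (x/2)^2) = f x
    set s := Real.sin (x/2) with hsdef
    set c := Real.cos (x/2) with hcdef
    have hsc : s^2 + c^2 = 1 := Real.sin_sq_add_cos_sq _
    have hcos : Real.cos x = 1 - 2 * s^2 := by
      have h := Real.cos_two_mul (x/2)
      rw [show 2*(x/2) = x by ring] at h
      linarith
    have hsin : Real.sin x = 2 * s * c := by
      have h := Real.sin_two_mul (x/2)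
      rw [show 2*(x/2) = x by ring] at h
      linarith
    have hden : Real.sqrt ((1 - Real.cos x) * (3 - Real.cos x)) =
        2 * |s| * Real.sqrt (1 + s^2) := by
      rw [hcos]
      have h1 : (1 - (1 - 2*s^2)) * (3 - (1 - 2*s^2)) = (2*|s|)^2 * (1 + s^2) := by
        rw [mul_pow, sq_abs]; ring
      rw [h1, Real.sqrt_mul (sq_nonneg _), Real.sqrt_sq (by positivity)]
    have hnum : Real.sqrt 2 * (1 - Real.cos x)^2 + Real.sin x ^ 2 =
        (2*|s|) * (2 * |s| * (1 + (Real.sqrt 2 - 1) * s^2)) := by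
      rw [hcos, hsin]
      have hc2 : c^2 = 1 - s^2 := by linarith
      have habs : |s| * |s| = s^2 := by rw [← sq_abs]; ring
      linear_combination 4*s^2*hc2 - (4*(1 + (Real.sqrt 2 - 1) * s^2))*habs
    simp only [hf]
    rw [hden, hnum]
    rcases eq_or_ne s 0 with h0 | h0
    · simp [h0]
    · have habs : (0:ℝ) < |s| := abs_pos.2 h0
      rw [eq_comm, mul_comm (2*|s|) (Real.sqrt (1+s^2)), ← div_div, mul_div_assoc]
      rw [mul_div_cancel_left₀ _ (by positivity : (2:ℝ)*|s| ≠ 0)]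
      try rw [mul_comm (Real.sqrt (1+s^2)) _]
      try rw [← mul_div_assoc]
  have hsplit : (∫ k in (-π)..π, f k) = (∫ k in (-π)..(0:ℝ), f k) + ∫ k in (0:ℝ)..π, f k :=
    (intervalIntegral.integral_add_adjacent_intervals (hintegrable _ _) (hintegrable _ _)).symm
  have hval : (∫ k in Set.Icc (-π) π, f k) = 2 * (π + 2 * (Real.sqrt 2 - 1)) := by
    rw [hIcc, hsplit, hint1, half_integral]; ring
  rw [hval]
  have hpi : (π:ℝ) ≠ 0 := Real.pi_ne_zero
  have h2 : Real.sqrt 2 * Real.sqrt 2 = 2 := Real.mul_self_sqrt (by norm_num)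
  have h2' : Real.sqrt 2 ^ 2 = 2 := Real.sq_sqrt (by norm_num)
  field_simp
  linear_combination 2*h2'
end

section
/- One has $\frac{\sqrt{2}+1}{2}\int_{-\pi}^{\pi} \frac{\sqrt{2}\,(1-\cos k)\cos k + \sin^2 k}{\sqrt{(1-\cos k)(3-\cos k)}}\,\frac{dk}{2\pi} \;=\; \frac{(\sqrt{2}+1)^2}{4}\Big(\sqrt{2} - \frac{4}{\pi}\Big)$, where the integral is over $[-\pi,\pi]$ with respect to Lebesgue measure divided by $2\pi$. -/
open MeasureTheory Real

noncomputable def gAux (k : ℝ) : ℝ :=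
  Real.sin (k/2) * (2*(1+Real.sqrt 2)*Real.cos (k/2)^2 - Real.sqrt 2) /
    Real.sqrt (2 - Real.cos (k/2)^2)

noncomputable def FAux (k : ℝ) : ℝ :=
  2*(1+Real.sqrt 2) * Real.cos (k/2) * Real.sqrt (2 - Real.cos (k/2)^2)
    - (4 + 2*Real.sqrt 2) * Real.arcsin (Real.cos (k/2) / Real.sqrt 2)

lemma gAux_cont : Continuous gAux := by
  apply Continuous.div
  · fun_prop
  · fun_prop
  · intro x
    have h : Real.cos (x/2)^2 ≤ 1 := Real.cos_sq_le_one _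
    have : (0:ℝ) < 2 - Real.cos (x/2)^2 := by linarith
    positivity

lemma hasDerivAt_FAux (k : ℝ) : HasDerivAt FAux (gAux k) k := by
  set c := Real.cos (k/2) with hc
  set s := Real.sin (k/2) with hs
  have hc2 : c^2 ≤ 1 := Real.cos_sq_le_one _
  have hpos : (0:ℝ) < 2 - c^2 := by linarith
  have hS : (0:ℝ) < Real.sqrt (2 - c^2) := Real.sqrt_pos.mpr hpos
  have h2 : (0:ℝ) < Real.sqrt 2 := Real.sqrt_pos.mpr (by norm_num)
  have h2sq : Real.sqrt 2 * Real.sqrt 2 = 2 := Real.mul_self_sqrt (by norm_num)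
  have h2gt : (1:ℝ) < Real.sqrt 2 := by nlinarith
  have hcabs : |c| ≤ 1 := Real.abs_cos_le_one _
  have hcl : -1 ≤ c := (abs_le.mp hcabs).1
  have hcu : c ≤ 1 := (abs_le.mp hcabs).2
  have h1 : HasDerivAt (fun k : ℝ => Real.cos (k/2)) (-s * (1/2)) k := by
    have := (Real.hasDerivAt_cos (k/2)).comp k ((hasDerivAt_id k).div_const 2)
    simpa [Function.comp_def, hs] using this
  have hpow : HasDerivAt (fun k : ℝ => Real.cos (k/2)^2)
      (2 * c ^ 1 * (-s * (1/2))) k := h1.pow 2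
  have hu : HasDerivAt (fun k : ℝ => 2 - Real.cos (k/2)^2)
      (-(2 * c ^ 1 * (-s * (1/2)))) k := hpow.const_sub 2
  have hsq : HasDerivAt (fun k : ℝ => Real.sqrt (2 - Real.cos (k/2)^2))
      (1 / (2 * Real.sqrt (2 - c^2)) * -(2 * c ^ 1 * (-s * (1/2)))) k :=
    (Real.hasDerivAt_sqrt hpos.ne').comp k hu
  have hprod := (h1.mul hsq).const_mul (2*(1+Real.sqrt 2))
  have hv : HasDerivAt (fun k : ℝ => Real.cos (k/2) / Real.sqrt 2)
      ((-s * (1/2)) / Real.sqrt 2) k := h1.div_const _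
  have hvne1 : c / Real.sqrt 2 ≠ 1 := by
    intro h
    have : c = Real.sqrt 2 := by field_simp at h; linarith
    nlinarith
  have hvne1' : c / Real.sqrt 2 ≠ -1 := by
    intro h
    have : c = -Real.sqrt 2 := by field_simp at h; linarith
    nlinarith
  have harc : HasDerivAt (fun k : ℝ => Real.arcsin (Real.cos (k/2) / Real.sqrt 2))
      (1 / Real.sqrt (1 - (c / Real.sqrt 2)^2) * ((-s * (1/2)) / Real.sqrt 2)) k :=
    by have := (Real.hasDerivAt_arcsin hvne1' hvne1).comp k hv; exact this
  have htot := hprod.sub (harc.const_mul (4 + 2*Real.sqrt 2))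
  convert htot using 1
  · rfl
  · rfl
  · ext x; rw [FAux]; simp only [Pi.sub_apply, Pi.mul_apply]; ring
  have hrw : Real.sqrt (1 - (c / Real.sqrt 2)^2) = Real.sqrt (2 - c^2) / Real.sqrt 2 := by
    rw [← Real.sqrt_div hpos.le]
    congr 1
    field_simp
    rw [Real.sq_sqrt (by norm_num : (0:ℝ) ≤ 2)]; ring
  rw [hrw]
  have hSsq : Real.sqrt (2 - c^2) * Real.sqrt (2 - c^2) = 2 - c^2 :=
    Real.mul_self_sqrt hpos.le
  rw [gAux]
  simp only [← hc, ← hs]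
  have e1 : Real.sqrt (2-c^2)^2 = 2 - c^2 := Real.sq_sqrt hpos.le
  have e2 : Real.sqrt 2^2 = 2 := Real.sq_sqrt (by norm_num)
  have e4 : Real.sqrt (2-c^2)^4 = (2-c^2)^2 := by
    rw [show (4:ℕ) = 2*2 from rfl, pow_mul, e1]
  field_simp
  ring_nf
  rw [e1]
  ring

lemma f_eq_g {k : ℝ} (h0 : 0 ≤ k) (hπ' : k ≤ π) :
    (Real.sqrt 2 * (1 - Real.cos k) * Real.cos k + Real.sin k ^ 2) /
      Real.sqrt ((1 - Real.cos k) * (3 - Real.cos k)) = gAux k := by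
  have hpi := Real.pi_pos
  set c := Real.cos (k/2) with hc
  set s := Real.sin (k/2) with hs
  have hs0 : 0 ≤ s := Real.sin_nonneg_of_nonneg_of_le_pi (by linarith) (by linarith)
  have hsc : s^2 = 1 - c^2 := Real.sin_sq (k/2)
  have hcos : Real.cos k = 2*c^2 - 1 := by
    have h := Real.cos_sq (k/2)
    rw [show 2*(k/2) = k by ring] at h
    rw [hc, h]; ring
  have hsin : Real.sin k = 2*s*c := by
    have h := Real.sin_two_mul (k/2)
    rw [show 2*(k/2) = k by ring] at h
    rw [hs, hc, ← h]
  have hc2 : c^2 ≤ 1 := Real.cos_sq_le_one _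
  have hpos : (0:ℝ) < 2 - c^2 := by linarith
  have hS : (0:ℝ) < Real.sqrt (2 - c^2) := Real.sqrt_pos.mpr hpos
  have hsqrt : Real.sqrt ((1 - Real.cos k) * (3 - Real.cos k))
      = 2*s*Real.sqrt (2 - c^2) := by
    have h : (1 - Real.cos k) * (3 - Real.cos k) = (2*s)^2 * (2 - c^2) := by
      rw [hcos]; linear_combination (4*c^2 - 8) * hsc
    rw [h, Real.sqrt_mul (sq_nonneg _), Real.sqrt_sq (by positivity)]
  have hnum : Real.sqrt 2 * (1 - Real.cos k) * Real.cos k + Real.sin k ^ 2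
      = 2*s^2*(2*(1+Real.sqrt 2)*c^2 - Real.sqrt 2) := by
    rw [hcos, hsin]
    linear_combination (2*Real.sqrt 2 - 4*Real.sqrt 2*c^2) * hsc
  rw [hnum, hsqrt, gAux, ← hc, ← hs]
  rcases eq_or_lt_of_le hs0 with h | h
  · rw [← h]; simp
  · field_simp

/-- `((√2+1)/2) ∫_{-π}^{π} (√2 (1-cos k) cos k + sin² k)/√((1-cos k)(3-cos k)) dk/(2π)
      = ((√2+1)²/4)(√2 - 4/π)`. -/
theorem stmt_5 :
    (Real.sqrt 2 + 1) / 2 *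
      ((∫ k in Set.Icc (-π) π,
          (Real.sqrt 2 * (1 - Real.cos k) * Real.cos k + Real.sin k ^ 2) /
            Real.sqrt ((1 - Real.cos k) * (3 - Real.cos k))) / (2 * π))
      = (Real.sqrt 2 + 1) ^ 2 / 4 * (Real.sqrt 2 - 4 / π) := by
  have hpi := Real.pi_pos
  set f : ℝ → ℝ := fun k =>
    (Real.sqrt 2 * (1 - Real.cos k) * Real.cos k + Real.sin k ^ 2) /
      Real.sqrt ((1 - Real.cos k) * (3 - Real.cos k)) with hf
  have hfeven : ∀ k, f (-k) = f k := by
    intro k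
    simp [hf, Real.cos_neg, Real.sin_neg]
  have hicc : ∫ k in Set.Icc (-π) π, f k = ∫ k in (-π)..π, f k := by
    rw [intervalIntegral.integral_of_le (by linarith), MeasureTheory.integral_Icc_eq_integral_Ioc]
  have heq : Set.EqOn f gAux (Set.uIcc 0 π) := by
    intro k hk
    rw [Set.uIcc_of_le hpi.le] at hk
    exact f_eq_g hk.1 hk.2
  have hint_g : IntervalIntegrable gAux volume 0 π := gAux_cont.intervalIntegrable _ _
  have hI1 : ∫ k in (0:ℝ)..π, f k = FAux π - FAux 0 := by
    rw [intervalIntegral.integral_congr heq]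
    exact intervalIntegral.integral_eq_sub_of_hasDerivAt (fun k _ => hasDerivAt_FAux k) hint_g
  have hI2 : ∫ k in (-π)..(0:ℝ), f k = FAux π - FAux 0 := by
    have h1 : ∫ k in (0:ℝ)..π, f (-k) = ∫ k in (-π)..(0:ℝ), f k := by
      simpa using intervalIntegral.integral_comp_neg (a := 0) (b := π) f
    rw [← h1]
    simp_rw [hfeven]
    exact hI1
  have hfi1 : IntervalIntegrable f volume 0 π :=
    (gAux_cont.continuousOn.congr heq).intervalIntegrable
  have heq2 : Set.EqOn f (fun k => gAux (-k)) (Set.uIcc (-π) 0) := by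
    intro k hk
    rw [Set.uIcc_of_le (by linarith)] at hk
    rw [← hfeven k]
    exact f_eq_g (by linarith [hk.2]) (by linarith [hk.1])
  have hfi2 : IntervalIntegrable f volume (-π) 0 :=
    (((gAux_cont.comp continuous_neg).continuousOn).congr heq2).intervalIntegrable
  have hsplit := intervalIntegral.integral_add_adjacent_intervals hfi2 hfi1
  have h2sq : Real.sqrt 2 * Real.sqrt 2 = 2 := Real.mul_self_sqrt (by norm_num)
  have h2 : (0:ℝ) < Real.sqrt 2 := Real.sqrt_pos.mpr (by norm_num)
  have harc : Real.arcsin (1 / Real.sqrt 2) = π/4 := by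
    have h1 : (1:ℝ)/Real.sqrt 2 = Real.sqrt 2 / 2 := by
      rw [div_eq_div_iff h2.ne' (by norm_num : (2:ℝ) ≠ 0)]
      linarith
    rw [h1, ← Real.sin_pi_div_four]
    exact Real.arcsin_sin (by linarith) (by linarith)
  have hFπ : FAux π = 0 := by
    rw [FAux, Real.cos_pi_div_two]
    simp
  have hF0 : FAux 0 = 2*(1+Real.sqrt 2) - (4+2*Real.sqrt 2)*(π/4) := by
    rw [FAux]
    have harc' : Real.arcsin (Real.sqrt 2)⁻¹ = π/4 := by rw [← one_div]; exact harc
    norm_num [Real.cos_zero, Real.sqrt_one, harc']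
  have hval : ∫ k in Set.Icc (-π) π, f k = 2 * (FAux π - FAux 0) := by
    rw [hicc, ← hsplit, hI1, hI2]; ring
  rw [hf] at hval
  rw [hval, hFπ, hF0]
  have e2 : Real.sqrt 2 ^ 2 = 2 := Real.sq_sqrt (by norm_num)
  have e3 : Real.sqrt 2 ^ 3 = 2 * Real.sqrt 2 := by
    rw [pow_succ, e2]
  field_simp
  ring_nf
  rw [e2]
  ring
end
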